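/- Let V = v₀…v_{n-1} be a cyclically reduced word of length n ≥ 1, let i, j ∈ {0,…,n-1} with i ≠ j, v_i ≠ v_j, and v̄_i ≠ v_{j-1} (indices mod n), and let m ≥ 1. Set U = V_i^m V_{i,j} (the cyclic rotation at i repeated m times, followed by the cyclic segment from i to j). Then the length of U satisfies m·n < ℓ(U) < (m+1)·n, and U is cyclically reduced. -/

import Mathlib

/-- The word `v_i v_{i+1} … v_{i+len-1}` read off from the letter function `v`. -/
def seg {A : Type*} (v : ℕ → A) (i len : ℕ) : List A :=
  (List.range len).map (fun t => v (i + t))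

/-- Freely reduced: no letter is followed by its formal inverse. -/
def FRed {A : Type*} (bar : A → A) (w : List A) : Prop :=
  w.Chain' (fun x y => y ≠ bar x)

/-- Cyclically reduced: every rotation is freely reduced. -/
def CRed {A : Type*} (bar : A → A) (w : List A) : Prop :=
  ∀ r, FRed bar (w.rotate r)

/-- `p`-fold concatenation power of a word. -/
def pw {A : Type*} (w : List A) (m : ℕ) : List A := (List.replicate m w).flatten

/-- `w₂` is a cyclic rotation of `w₁`. -/
def IsRot {A : Type*} (w₁ w₂ : List A) : Prop := ∃ r, w₂ = w₁.rotate r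

/-- The cyclic class of `w` is not that of a proper power. -/
def Nonpower {A : Type*} (w : List A) : Prop :=
  ¬ ∃ (u : List A) (p : ℕ), 2 ≤ p ∧ IsRot (pw u p) w

lemma seg_length {A : Type*} (v : ℕ → A) (i len : ℕ) : (seg v i len).length = len := by
  simp [seg]

lemma seg_getElem {A : Type*} (v : ℕ → A) (i len t : ℕ) (h : t < (seg v i len).length) :
    (seg v i len)[t] = v (i + t) := by
  simp [seg]

lemma seg_add {A : Type*} (v : ℕ → A) (i a b : ℕ) :
    seg v i (a + b) = seg v i a ++ seg v (i + a) b := by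
  simp only [seg, List.range_add, List.map_append, List.map_map]
  congr 1
  apply List.map_congr_left
  intro t _
  simp [Function.comp]
  ring_nf

lemma vper_mul {A : Type*} (v : ℕ → A) (n : ℕ) (hper : ∀ t, v (t + n) = v t) :
    ∀ k t, v (t + k * n) = v t := by
  intro k
  induction k with
  | zero => simp
  | succ k ih => intro t; rw [Nat.succ_mul, ← Nat.add_assoc, hper, ih]

lemma seg_shift {A : Type*} (v : ℕ → A) (n : ℕ) (hper : ∀ t, v (t + n) = v t)
    (i k b : ℕ) : seg v (i + k * n) b = seg v i b := by
  unfold seg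
  apply List.map_congr_left
  intro t _
  rw [Nat.add_right_comm, vper_mul v n hper]

lemma pw_seg {A : Type*} (v : ℕ → A) (n : ℕ) (hper : ∀ t, v (t + n) = v t)
    (i m : ℕ) : pw (seg v i n) m = seg v i (m * n) := by
  induction m with
  | zero => simp [pw, seg]
  | succ m ih =>
      rw [pw, List.replicate_succ, List.flatten_cons]
      rw [show (List.replicate m (seg v i n)).flatten = pw (seg v i n) m from rfl, ih]
      rw [Nat.succ_mul, Nat.add_comm (m*n) n, seg_add]
      rw [show i + n = i + 1 * n by ring, seg_shift v n hper]

lemma cred_seg {A : Type*} (bar : A → A) (v : ℕ → A)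
    (hred : ∀ t, v (t + 1) ≠ bar (v t))
    (i N : ℕ) (hN : 1 ≤ N)
    (hwrap : v i ≠ bar (v (i + N - 1))) :
    CRed bar (seg v i N) := by
  intro r
  unfold FRed
  unfold List.Chain'
  rw [List.isChain_iff_getElem]
  intro t ht
  simp only [List.length_rotate, seg_length] at ht
  try simp only [List.get_eq_getElem]
  have hlen : (seg v i N).length = N := seg_length v i N
  rw [List.getElem_rotate, List.getElem_rotate]
  simp only [hlen]
  set a := (t + r) % N with ha
  have haN : a < N := Nat.mod_lt _ (by omega)
  have hb : (t + 1 + r) % N = (a + 1) % N := by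
    rw [ha, Nat.mod_add_mod, Nat.add_right_comm]
  rw [seg_getElem, seg_getElem, hb, ← ha]
  by_cases hc : a + 1 < N
  · rw [Nat.mod_eq_of_lt hc, ← Nat.add_assoc]
    exact hred (i + a)
  · have ha1 : a + 1 = N := by omega
    have h0 : (a + 1) % N = 0 := by rw [ha1, Nat.mod_self]
    have hia : i + a = i + N - 1 := by omega
    rw [h0, Nat.add_zero, hia]
    exact hwrap

/-- With `i ≠ j`, `v_i ≠ v_j`, `v̄_i ≠ v_{j-1}` and `m ≥ 1`,
the word `U = V_i^m V_{i,j}` satisfies `m·n < ℓ(U) < (m+1)·n` and is cyclically reduced. -/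
theorem stmt2 {A : Type*} (bar : A → A) (hbar : ∀ x, bar (bar x) = x)
    (v : ℕ → A) (n : ℕ) (hn : 1 ≤ n)
    (hper : ∀ t, v (t + n) = v t)
    (hred : ∀ t, v (t + 1) ≠ bar (v t))
    (i j : ℕ) (hi : i < n) (hj : j < n) (hij : i ≠ j)
    (h1 : v i ≠ v j) (h2 : bar (v i) ≠ v (j + n - 1))
    (m : ℕ) (hm : 1 ≤ m) :
    m * n < (pw (seg v i n) m ++ seg v i ((j + n - i) % n)).length ∧
    (pw (seg v i n) m ++ seg v i ((j + n - i) % n)).length < (m + 1) * n ∧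
    CRed bar (pw (seg v i n) m ++ seg v i ((j + n - i) % n)) := by
  set L := (j + n - i) % n with hL
  have hLn : L < n := Nat.mod_lt _ (by omega)
  obtain ⟨hL1, hveq⟩ : 1 ≤ L ∧ v (i + L - 1) = v (j + n - 1) := by
    rcases Nat.lt_or_gt_of_ne hij with h | h
    · have hLe : L = j - i := by
        rw [hL, show j + n - i = (j - i) + n by omega, Nat.add_mod_right,
          Nat.mod_eq_of_lt (by omega)]
      refine ⟨by omega, ?_⟩
      rw [hLe, show i + (j - i) - 1 = j - 1 by omega,
        show j + n - 1 = (j - 1) + n by omega, hper]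
    · have hLe : L = j + n - i := Nat.mod_eq_of_lt (by omega)
      refine ⟨by omega, ?_⟩
      rw [hLe, show i + (j + n - i) - 1 = j + n - 1 by omega]
  have hU : pw (seg v i n) m ++ seg v i L = seg v i (m * n + L) := by
    rw [pw_seg v n hper, seg_add]
    congr 1
    exact (seg_shift v n hper i m L).symm
  rw [hU, seg_length]
  refine ⟨Nat.lt_add_of_pos_right hL1, ?_, ?_⟩
  · rw [Nat.add_mul, Nat.one_mul]
    exact Nat.add_lt_add_left hLn _
  · apply cred_seg bar v hred i (m * n + L) (Nat.le_trans hL1 (Nat.le_add_left _ _))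
    rw [show i + (m * n + L) - 1 = (i + L - 1) + m * n by omega,
      vper_mul v n hper, hveq]
    intro h
    apply h2
    rw [h, hbar]
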